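/- For every integer n ≥ 1 and all integers m, k, the cyclically presented group G_n(x_0 x_m x_k^{-1}) is isomorphic (as a group) to the cyclically presented group G_n(x_0 x_m x_{m−k}^{-1}). -/

import Mathlib

/-- Relators `x_i x_{i+a} x_{i+b}` of the cyclic presentation `P_n(x_0 x_a x_b)`. -/
def posRels (n : ℕ) (a b : ZMod n) : Set (FreeGroup (ZMod n)) :=
  Set.range fun i : ZMod n => FreeGroup.of i * FreeGroup.of (i + a) * FreeGroup.of (i + b)

/-- The cyclically presented group `G_n(x_0 x_a x_b)`. -/
abbrev Gpos (n : ℕ) (a b : ZMod n) : Type := PresentedGroup (posRels n a b)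

/-- Relators `x_i x_{i+a} x_{i+b}⁻¹` of the cyclic presentation `P_n(x_0 x_a x_b⁻¹)`. -/
def negRels (n : ℕ) (a b : ZMod n) : Set (FreeGroup (ZMod n)) :=
  Set.range fun i : ZMod n => FreeGroup.of i * FreeGroup.of (i + a) * (FreeGroup.of (i + b))⁻¹

/-- The cyclically presented group `G_n(x_0 x_a x_b⁻¹)`. -/
abbrev Gneg (n : ℕ) (a b : ZMod n) : Type := PresentedGroup (negRels n a b)

lemma negRel_eq_one (n : ℕ) (a b i : ZMod n) :
    (PresentedGroup.of i : Gneg n a b) * PresentedGroup.of (i + a) *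
      (PresentedGroup.of (i + b))⁻¹ = 1 := by
  have hmem : FreeGroup.of i * FreeGroup.of (i + a) * (FreeGroup.of (i + b))⁻¹ ∈
      Subgroup.normalClosure (negRels n a b) :=
    Subgroup.subset_normalClosure ⟨i, rfl⟩
  have := (QuotientGroup.eq_one_iff
    (FreeGroup.of i * FreeGroup.of (i + a) * (FreeGroup.of (i + b))⁻¹)).2 hmem
  exact this

lemma negHom_cond (n : ℕ) (a b c : ZMod n) (h : b + c = a) :
    ∀ r ∈ negRels n a b,
      FreeGroup.lift (fun i : ZMod n => (PresentedGroup.of (rels := negRels n a c) (-i))⁻¹) r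
        = 1 := by
  rintro r ⟨i, rfl⟩
  simp only [map_mul, map_inv, FreeGroup.lift_apply_of, inv_inv]
  have key := negRel_eq_one n a c (-i - a)
  have h1 : -i - a + a = -i := by ring
  have h2 : -i - a + c = -(i + b) := by
    have : c = a - b := by rw [← h]; ring
    rw [this]; ring
  rw [h1, h2] at key
  have hab : (-(i + a) : ZMod n) = -i - a := by ring
  rw [hab]
  have := key.symm
  have h3 : (PresentedGroup.of (-(i + b)) : Gneg n a c) =
      PresentedGroup.of (-i - a) * PresentedGroup.of (-i) := (mul_inv_eq_one.mp key).symm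
  rw [h3]; group

/-- The canonical hom `Gneg n a b →* Gneg n a c` when `b + c = a`, sending `x_i ↦ x_{-i}⁻¹`. -/
def negHom (n : ℕ) (a b c : ZMod n) (h : b + c = a) : Gneg n a b →* Gneg n a c :=
  PresentedGroup.toGroup (negHom_cond n a b c h)

lemma negHom_of (n : ℕ) (a b c : ZMod n) (h : b + c = a) (i : ZMod n) :
    negHom n a b c h (PresentedGroup.of i) = (PresentedGroup.of (-i))⁻¹ :=
  PresentedGroup.toGroup.of _

set_option synthInstance.maxHeartbeats 1000000 in
/-- The isomorphism. -/
noncomputable def negEquiv (n : ℕ) (a b c : ZMod n) (h : b + c = a) :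
    Gneg n a b ≃* Gneg n a c := by
  have h' : c + b = a := by rw [add_comm]; exact h
  have hl : (negHom n a c b h').comp (negHom n a b c h) = MonoidHom.id _ := by
    ext i; simp [negHom_of]
  have hr : (negHom n a b c h).comp (negHom n a c b h') = MonoidHom.id _ := by
    ext i; simp [negHom_of]
  exact { toFun := negHom n a b c h, invFun := negHom n a c b h',
          left_inv := fun x => DFunLike.congr_fun hl x,
          right_inv := fun x => DFunLike.congr_fun hr x,
          map_mul' := map_mul _ }

theorem stmt9 (n : ℕ) (hn : 1 ≤ n) (m k : ℤ) :
    Nonempty (Gneg n (m : ZMod n) (k : ZMod n) ≃*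
      Gneg n (m : ZMod n) ((m - k : ℤ) : ZMod n)) := by
  refine ⟨negEquiv n _ _ _ ?_⟩
  push_cast
  ring
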